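/- arXiv:1804.09485 — 4 statements merged into one kernel-verified Lean document; each statement's English description precedes it below -/
import Mathlib

section
/- For any odd prime p with n = (p-1)/2, the double sum over i from n+1 to 2n and j from n+1 to 2n of S(i,j) is congruent to 0 modulo p. -/
open Finset

lemma val_ineq (q m n : ℕ) (hq : q.Prime) :
    padicValNat q ((m + n).choose m) ≤
      padicValNat q ((2 * m).choose m) + padicValNat q ((2 * n).choose n) := by
  haveI := Fact.mk hq
  set b := Nat.log q (2 * (m + n)) + 1 with hb
  have hb1 : Nat.log q (m + n) < b :=
    lt_of_le_of_lt (Nat.log_mono_right (by omega)) (Nat.lt_succ_self _)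
  have hb2 : Nat.log q (2 * m) < b :=
    lt_of_le_of_lt (Nat.log_mono_right (by omega)) (Nat.lt_succ_self _)
  have hb3 : Nat.log q (2 * n) < b :=
    lt_of_le_of_lt (Nat.log_mono_right (by omega)) (Nat.lt_succ_self _)
  rw [padicValNat_choose (Nat.le_add_right m n) hb1,
    padicValNat_choose (by omega : m ≤ 2 * m) hb2,
    padicValNat_choose (by omega : n ≤ 2 * n) hb3]
  have e1 : m + n - m = n := by omega
  have e2 : 2 * m - m = m := by omega
  have e3 : 2 * n - n = n := by omega
  rw [e1, e2, e3]
  calc ((Finset.Ico 1 b).filter fun i => q ^ i ≤ m % q ^ i + n % q ^ i).card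
      ≤ (((Finset.Ico 1 b).filter fun i => q ^ i ≤ m % q ^ i + m % q ^ i) ∪
         ((Finset.Ico 1 b).filter fun i => q ^ i ≤ n % q ^ i + n % q ^ i)).card := by
        apply Finset.card_le_card
        rw [← Finset.filter_or]
        apply Finset.monotone_filter_right
        intro i hi
        omega
    _ ≤ _ := Finset.card_union_le _ _

lemma choose_dvd_central (m n : ℕ) :
    Nat.choose (m + n) m ∣ Nat.choose (2 * m) m * Nat.choose (2 * n) n := by
  have h1 : 0 < Nat.choose (m + n) m := Nat.choose_pos (Nat.le_add_right m n)
  have h2 : 0 < Nat.choose (2 * m) m := Nat.choose_pos (by omega)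
  have h3 : 0 < Nat.choose (2 * n) n := Nat.choose_pos (by omega)
  rw [← Nat.factorization_le_iff_dvd h1.ne' (by positivity)]
  intro q
  by_cases hq : q.Prime
  · rw [Nat.factorization_mul h2.ne' h3.ne']
    simp only [Finsupp.coe_add, Pi.add_apply]
    rw [Nat.factorization_def _ hq, Nat.factorization_def _ hq, Nat.factorization_def _ hq]
    exact val_ineq q m n hq
  · simp [Nat.factorization_eq_zero_of_not_prime _ hq]

/-- The super Catalan numbers `S(m,n) = C(2m,m)·C(2n,n)/C(m+n,m)` (the division is exact). -/
def superCatalan (m n : ℕ) : ℕ :=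
  (Nat.choose (2 * m) m * Nat.choose (2 * n) n) / Nat.choose (m + n) m

theorem stmt15 (p : ℕ) (hp : p.Prime) (hodd : Odd p) :
    (↑(∑ i ∈ Finset.Icc ((p - 1) / 2 + 1) (2 * ((p - 1) / 2)),
          ∑ j ∈ Finset.Icc ((p - 1) / 2 + 1) (2 * ((p - 1) / 2)), superCatalan i j) : ZMod p) =
      0 := by
  haveI := Fact.mk hp
  have hp2 : 2 ≤ p := hp.two_le
  have hp3 : 3 ≤ p := by rcases hodd with ⟨k, hk⟩; omega
  set n := (p - 1) / 2 with hn
  have hpn : p = 2 * n + 1 := by rcases hodd with ⟨k, hk⟩; omega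
  push_cast
  apply Finset.sum_eq_zero
  intro i hi
  apply Finset.sum_eq_zero
  intro j hj
  rw [Finset.mem_Icc] at hi hj
  rw [ZMod.natCast_eq_zero_iff]
  -- p ∣ superCatalan i j
  have hAdvd : p ∣ Nat.choose (2 * i) i :=
    hp.dvd_choose (by omega) (by omega) (by omega)
  have hBdvd : p ∣ Nat.choose (2 * j) j :=
    hp.dvd_choose (by omega) (by omega) (by omega)
  have hA : 0 < Nat.choose (2 * i) i := Nat.choose_pos (by omega)
  have hB : 0 < Nat.choose (2 * j) j := Nat.choose_pos (by omega)
  have hD : 0 < Nat.choose (i + j) i := Nat.choose_pos (Nat.le_add_right i j)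
  have hdvd := choose_dvd_central i j
  have hSC : superCatalan i j * Nat.choose (i + j) i
      = Nat.choose (2 * i) i * Nat.choose (2 * j) j := by
    rw [superCatalan, Nat.div_mul_cancel hdvd]
  have hS0 : 0 < superCatalan i j := by
    rcases Nat.eq_zero_or_pos (superCatalan i j) with h | h
    · exfalso; rw [h, zero_mul] at hSC; exact (Nat.mul_pos hA hB).ne' hSC.symm
    · exact h
  apply Nat.dvd_of_factorization_pos (n := superCatalan i j) (p := p)
  have hfac : (superCatalan i j).factorization p + (Nat.choose (i + j) i).factorization p
      = (Nat.choose (2 * i) i).factorization p + (Nat.choose (2 * j) j).factorization p := by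
    have := congrArg (Nat.factorization · p) hSC
    simpa [Nat.factorization_mul hS0.ne' hD.ne', Nat.factorization_mul hA.ne' hB.ne'] using this
  have h1 : 1 ≤ (Nat.choose (2 * i) i).factorization p :=
    (Nat.Prime.factorization_pos_of_dvd hp hA.ne' hAdvd)
  have h2 : 1 ≤ (Nat.choose (2 * j) j).factorization p :=
    (Nat.Prime.factorization_pos_of_dvd hp hB.ne' hBdvd)
  have h3 : (Nat.choose (i + j) i).factorization p ≤ 1 :=
    Nat.factorization_choose_le_one (by nlinarith : i + j < p ^ 2)
  omega
end

section
/- For an odd prime p with n = (p-1)/2, and integers i, j with 0 ≤ i ≤ n, 1 ≤ j ≤ n, and i+j ≥ n+1, one has C(2i,i)*C(2j+2n,j+n)/C(i+j+n,i) ≡ (-1)^i * 4^(i+j) * C(j-1, n-i) / 2 modulo p. -/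
open Finset Nat

private lemma div3le (a b t : ℕ) : a / t + b / t + (a + b) / t ≤ 2 * a / t + 2 * b / t := by
  rcases Nat.eq_zero_or_pos t with rfl | ht
  · simp
  have h1 := Nat.add_div (a := a) (b := b) ht
  have h2 := Nat.add_div (a := a) (b := a) ht
  have h3 := Nat.add_div (a := b) (b := b) ht
  have ha := Nat.mod_lt a ht
  have hb := Nat.mod_lt b ht
  have e2 : 2 * a = a + a := by ring
  have e3 : 2 * b = b + b := by ring
  rw [h1, e2, e3, h2, h3]
  split_ifs <;> omega

private lemma legendreFor {q n b : ℕ} (hq : q.Prime) (hb : Nat.log q n < b) :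
    (n !).factorization q = ∑ s ∈ Finset.Ico 1 b, n / q ^ s := by
  have h1 : q ^ ((n !).factorization q) ∣ n ! := Nat.ordProj_dvd _ _
  have h2 := (hq.pow_dvd_factorial_iff hb).mp h1
  have h3 : q ^ (∑ s ∈ Finset.Ico 1 b, n / q ^ s) ∣ n ! :=
    (hq.pow_dvd_factorial_iff hb).mpr le_rfl
  have h4 := (Nat.Prime.pow_dvd_iff_le_factorization hq (Nat.factorial_ne_zero n)).mp h3
  omega

private lemma keyDvd (a b : ℕ) : a ! * b ! * (a + b)! ∣ (2 * a)! * (2 * b)! := by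
  have hD : a ! * b ! * (a + b)! ≠ 0 := by positivity
  have hN : (2 * a)! * (2 * b)! ≠ 0 := by positivity
  rw [← Nat.factorization_le_iff_dvd hD hN, Finsupp.le_def]
  intro q
  by_cases hq : q.Prime
  · have hlog : ∀ m : ℕ, m ≤ 2 * a + 2 * b → Nat.log q m < 2 * a + 2 * b + 1 := fun m hm =>
      lt_of_le_of_lt (Nat.log_le_self _ _) (by omega)
    rw [Nat.factorization_mul (by positivity) (by positivity),
        Nat.factorization_mul (by positivity) (by positivity),
        Nat.factorization_mul (by positivity) (by positivity)]
    simp only [Finsupp.add_apply]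
    rw [legendreFor hq (hlog a (by omega)), legendreFor hq (hlog b (by omega)),
        legendreFor hq (hlog (a + b) (by omega)), legendreFor hq (hlog (2 * a) (by omega)),
        legendreFor hq (hlog (2 * b) (by omega)),
        ← Finset.sum_add_distrib, ← Finset.sum_add_distrib, ← Finset.sum_add_distrib]
    exact Finset.sum_le_sum fun s _ => div3le a b (q ^ s)
  · simp [Nat.factorization_eq_zero_of_not_prime _ hq]

private lemma prodEven (m : ℕ) : (2 * m)! = 2 ^ m * m ! * ∏ k ∈ range m, (2 * k + 1) := by
  induction m with
  | zero => simp
  | succ m ih =>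
    have h : 2 * (m + 1) = (2 * m + 1) + 1 := by ring
    rw [h, Nat.factorial_succ, Nat.factorial_succ, ih, prod_range_succ, Nat.factorial_succ]
    ring

private lemma prodOdd (m : ℕ) : (2 * m + 1)! = 2 ^ m * m ! * ∏ k ∈ range (m + 1), (2 * k + 1) := by
  rw [Nat.factorial_succ, prodEven, prod_range_succ]
  ring

private lemma prodShift (n : ℕ) : ∀ m : ℕ, (n + m)! = n ! * ∏ k ∈ range m, (n + 1 + k) := by
  intro m
  induction m with
  | zero => simp
  | succ m ih =>
    have h : n + (m + 1) = (n + m) + 1 := by ring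
    rw [h, Nat.factorial_succ, ih, prod_range_succ]
    ring

private lemma prodDown : ∀ (i n : ℕ), i ≤ n → n ! = (n - i)! * ∏ k ∈ range i, (n - k) := by
  intro i
  induction i with
  | zero => intro n _; simp
  | succ i ih =>
    intro n h
    have e : n - i = (n - (i + 1)) + 1 := by omega
    rw [ih n (by omega), prod_range_succ, e, Nat.factorial_succ]
    ring

private lemma facShift (p : ℕ) (hp : p.Prime) [Fact p.Prime] (r : ℕ) :
    ∃ F : ℕ, (p + r)! = p * F ∧ (F : ZMod p) = -((r ! : ℕ) : ZMod p) := by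
  induction r with
  | zero =>
    refine ⟨(p - 1)!, ?_, ?_⟩
    · have e : p + 0 = (p - 1) + 1 := by have := hp.pos; omega
      rw [e, Nat.factorial_succ]
      have e2 : p - 1 + 1 = p := by have := hp.pos; omega
      rw [e2]
    · simp [ZMod.wilsons_lemma]
  | succ r ih =>
    obtain ⟨F, hF1, hF2⟩ := ih
    refine ⟨(p + r + 1) * F, ?_, ?_⟩
    · have e : p + (r + 1) = (p + r) + 1 := by ring
      rw [e, Nat.factorial_succ, hF1]
      ring
    · have h0 : (p : ZMod p) = 0 := ZMod.natCast_self p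
      push_cast [Nat.factorial_succ, h0]
      linear_combination ((r : ZMod p) + 1) * hF2

theorem stmt16 (p : ℕ) (hp : p.Prime) (hodd : Odd p) (i j : ℕ)
    (hi : i ≤ (p - 1) / 2) (hj1 : 1 ≤ j) (hj : j ≤ (p - 1) / 2)
    (hij : (p - 1) / 2 + 1 ≤ i + j) :
    (↑((Nat.choose (2 * i) i * Nat.choose (2 * j + 2 * ((p - 1) / 2)) (j + (p - 1) / 2)) /
          Nat.choose (i + j + (p - 1) / 2) i) : ZMod p) =
      (-1 : ZMod p) ^ i * 4 ^ (i + j) * (Nat.choose (j - 1) ((p - 1) / 2 - i) : ZMod p) * (2 : ZMod p)⁻¹ := by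
  haveI : Fact p.Prime := ⟨hp⟩
  obtain ⟨m, hm⟩ := hodd
  have hp2 : 2 < p := by
    have := hp.two_le; omega
  set n := (p - 1) / 2 with hn
  have hpn : p = 2 * n + 1 := by omega
  -- integer super Catalan number
  have hK : i ! * (j + n)! * (i + j + n)! ∣ (2 * i)! * (2 * (j + n))! := by
    have := keyDvd i (j + n)
    rwa [← add_assoc] at this
  set S := (2 * i)! * (2 * (j + n))! / (i ! * (j + n)! * (i + j + n)!) with hS
  have hSD : S * (i ! * (j + n)! * (i + j + n)!) = (2 * i)! * (2 * (j + n))! :=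
    Nat.div_mul_cancel hK
  -- the LHS of the statement equals S
  have c1 : Nat.choose (2 * i) i * i ! * i ! = (2 * i)! := by
    have := Nat.choose_mul_factorial_mul_factorial (show i ≤ 2 * i by omega)
    rwa [show 2 * i - i = i by omega] at this
  have c2 : Nat.choose (2 * (j + n)) (j + n) * (j + n)! * (j + n)! = (2 * (j + n))! := by
    have := Nat.choose_mul_factorial_mul_factorial (show j + n ≤ 2 * (j + n) by omega)
    rwa [show 2 * (j + n) - (j + n) = j + n by omega] at this
  have c3 : Nat.choose (i + j + n) i * i ! * (j + n)! = (i + j + n)! := by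
    have := Nat.choose_mul_factorial_mul_factorial (show i ≤ i + j + n by omega)
    rwa [show i + j + n - i = j + n by omega] at this
  have E : (Nat.choose (2 * i) i * Nat.choose (2 * (j + n)) (j + n)) *
      (i ! * i ! * (j + n)! * (j + n)!) =
      (S * Nat.choose (i + j + n) i) * (i ! * i ! * (j + n)! * (j + n)!) := by
    calc (Nat.choose (2 * i) i * Nat.choose (2 * (j + n)) (j + n)) *
        (i ! * i ! * (j + n)! * (j + n)!)
        = (Nat.choose (2 * i) i * i ! * i !) *
          (Nat.choose (2 * (j + n)) (j + n) * (j + n)! * (j + n)!) := by ring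
      _ = (2 * i)! * (2 * (j + n))! := by rw [c1, c2]
      _ = S * (i ! * (j + n)! * (i + j + n)!) := hSD.symm
      _ = S * (i ! * (j + n)! * (Nat.choose (i + j + n) i * i ! * (j + n)!)) := by rw [c3]
      _ = (S * Nat.choose (i + j + n) i) * (i ! * i ! * (j + n)! * (j + n)!) := by ring
  have hQeq : Nat.choose (2 * i) i * Nat.choose (2 * (j + n)) (j + n) =
      S * Nat.choose (i + j + n) i :=
    Nat.eq_of_mul_eq_mul_right (by positivity) E
  have hLHS : Nat.choose (2 * i) i * Nat.choose (2 * j + 2 * n) (j + n) /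
      Nat.choose (i + j + n) i = S := by
    rw [show 2 * j + 2 * n = 2 * (j + n) by ring, hQeq,
      Nat.mul_div_cancel _ (Nat.choose_pos (show i ≤ i + j + n by omega))]
  rw [hLHS]
  -- extract the factor p
  set r1 := i + j - n - 1 with hr1
  set r2 := 2 * j - 1 with hr2
  obtain ⟨A, hA1, hA2⟩ := facShift p hp r1
  obtain ⟨B, hB1, hB2⟩ := facShift p hp r2
  have e6 : (S : ZMod p) * ((i ! : ℕ) : ZMod p) * (((j + n)! : ℕ) : ZMod p) *
      ((r1 ! : ℕ) : ZMod p) = (((2 * i)! : ℕ) : ZMod p) * ((r2 ! : ℕ) : ZMod p) := by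
    have hnat : S * (i ! * (j + n)! * A) = (2 * i)! * B := by
      have h5 : p * (S * (i ! * (j + n)! * A)) = p * ((2 * i)! * B) := by
        calc p * (S * (i ! * (j + n)! * A)) = S * (i ! * (j + n)! * (p * A)) := by ring
          _ = S * (i ! * (j + n)! * (i + j + n)!) := by
              rw [← hA1, show i + j + n = p + r1 by omega]
          _ = (2 * i)! * (2 * (j + n))! := hSD
          _ = (2 * i)! * (p * B) := by rw [show 2 * (j + n) = p + r2 by omega, hB1]
          _ = p * ((2 * i)! * B) := by ring
      exact Nat.eq_of_mul_eq_mul_left hp.pos h5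
    have hc := congrArg (Nat.cast : ℕ → ZMod p) hnat
    push_cast at hc
    rw [hA2, hB2] at hc
    linear_combination -hc
  -- nonzero facts
  have hfac_ne : ∀ m : ℕ, m < p → ((m ! : ℕ) : ZMod p) ≠ 0 := by
    intro m hmp
    rw [Ne, ZMod.natCast_eq_zero_iff]
    intro hdvd
    have := (Nat.Prime.dvd_factorial hp).mp hdvd
    omega
  have h2ne : (2 : ZMod p) ≠ 0 := by
    have : ((2 : ℕ) : ZMod p) ≠ 0 := by
      rw [Ne, ZMod.natCast_eq_zero_iff]
      intro hdvd
      have := Nat.le_of_dvd (by omega) hdvd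
      omega
    simpa using this
  -- product conversions
  have hprodQ : (2 : ZMod p) ^ j * ∏ k ∈ range j, (((n + 1 + k : ℕ)) : ZMod p) =
      ∏ k ∈ range j, (((2 * k + 1 : ℕ)) : ZMod p) := by
    calc (2 : ZMod p) ^ j * ∏ k ∈ range j, (((n + 1 + k : ℕ)) : ZMod p)
        = ∏ k ∈ range j, ((2 : ZMod p) * ((n + 1 + k : ℕ) : ZMod p)) := by
          rw [Finset.prod_mul_distrib, Finset.prod_const, Finset.card_range]
      _ = ∏ k ∈ range j, (((2 * k + 1 : ℕ)) : ZMod p) := by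
          refine Finset.prod_congr rfl fun k _ => ?_
          have e : (2 * (n + 1 + k) : ℕ) = p + (2 * k + 1) := by omega
          calc (2 : ZMod p) * ((n + 1 + k : ℕ) : ZMod p)
              = ((2 * (n + 1 + k) : ℕ) : ZMod p) := by push_cast; ring
            _ = ((p + (2 * k + 1) : ℕ) : ZMod p) := by rw [e]
            _ = ((2 * k + 1 : ℕ) : ZMod p) := by
                push_cast [ZMod.natCast_self]; ring
  have hprodR : (2 : ZMod p) ^ i * ∏ k ∈ range i, (((n - k : ℕ)) : ZMod p) =
      (-1 : ZMod p) ^ i * ∏ k ∈ range i, (((2 * k + 1 : ℕ)) : ZMod p) := by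
    calc (2 : ZMod p) ^ i * ∏ k ∈ range i, (((n - k : ℕ)) : ZMod p)
        = ∏ k ∈ range i, ((2 : ZMod p) * ((n - k : ℕ) : ZMod p)) := by
          rw [Finset.prod_mul_distrib, Finset.prod_const, Finset.card_range]
      _ = ∏ k ∈ range i, (-(((2 * k + 1 : ℕ)) : ZMod p)) := by
          refine Finset.prod_congr rfl fun k hk => ?_
          have hki : k < i := Finset.mem_range.mp hk
          have e : (2 * (n - k) : ℕ) + (2 * k + 1) = p := by omega
          have h1 : (2 : ZMod p) * ((n - k : ℕ) : ZMod p) = ((2 * (n - k) : ℕ) : ZMod p) := by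
            rw [Nat.cast_mul]; norm_num
          have h2 : ((2 * (n - k) : ℕ) : ZMod p) + ((2 * k + 1 : ℕ) : ZMod p) = 0 := by
            rw [← Nat.cast_add, e, ZMod.natCast_self]
          rw [h1]
          linear_combination h2
      _ = ∏ k ∈ range i, ((-1 : ZMod p) * (((2 * k + 1 : ℕ)) : ZMod p)) :=
          Finset.prod_congr rfl fun k _ => (neg_one_mul _).symm
      _ = (-1 : ZMod p) ^ i * ∏ k ∈ range i, (((2 * k + 1 : ℕ)) : ZMod p) := by
          rw [Finset.prod_mul_distrib, Finset.prod_const, Finset.card_range]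
  -- factorial decompositions (cast)
  have hF2i : (((2 * i)! : ℕ) : ZMod p) =
      (2 : ZMod p) ^ i * ((i ! : ℕ) : ZMod p) * ∏ k ∈ range i, (((2 * k + 1 : ℕ)) : ZMod p) := by
    rw [prodEven i, Nat.cast_mul, Nat.cast_mul, Nat.cast_pow, Nat.cast_prod]
    norm_num
  obtain ⟨j', rfl⟩ : ∃ j', j = j' + 1 := ⟨j - 1, by omega⟩
  have hr2e : r2 = 2 * j' + 1 := by omega
  have hF2j : ((r2 ! : ℕ) : ZMod p) =
      (2 : ZMod p) ^ j' * ((j' ! : ℕ) : ZMod p) *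
        ∏ k ∈ range (j' + 1), (((2 * k + 1 : ℕ)) : ZMod p) := by
    rw [hr2e, prodOdd j', Nat.cast_mul, Nat.cast_mul, Nat.cast_pow, Nat.cast_prod]
    norm_num
  have hFjn : ((((j' + 1) + n)! : ℕ) : ZMod p) =
      ((n ! : ℕ) : ZMod p) * ∏ k ∈ range (j' + 1), (((n + 1 + k : ℕ)) : ZMod p) := by
    rw [show (j' + 1) + n = n + (j' + 1) by ring, prodShift n (j' + 1), Nat.cast_mul,
      Nat.cast_prod]
  have hFn : ((n ! : ℕ) : ZMod p) =
      (((n - i)! : ℕ) : ZMod p) * ∏ k ∈ range i, (((n - k : ℕ)) : ZMod p) := by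
    rw [prodDown i n hi, Nat.cast_mul, Nat.cast_prod]
  -- the combined product identity
  have hcomb : (2 : ZMod p) ^ (i + (j' + 1)) *
      ((∏ k ∈ range i, (((n - k : ℕ)) : ZMod p)) *
        ∏ k ∈ range (j' + 1), (((n + 1 + k : ℕ)) : ZMod p)) =
      (-1 : ZMod p) ^ i *
      ((∏ k ∈ range i, (((2 * k + 1 : ℕ)) : ZMod p)) *
        ∏ k ∈ range (j' + 1), (((2 * k + 1 : ℕ)) : ZMod p)) := by
    calc (2 : ZMod p) ^ (i + (j' + 1)) *
        ((∏ k ∈ range i, (((n - k : ℕ)) : ZMod p)) *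
          ∏ k ∈ range (j' + 1), (((n + 1 + k : ℕ)) : ZMod p))
        = ((2 : ZMod p) ^ i * ∏ k ∈ range i, (((n - k : ℕ)) : ZMod p)) *
          ((2 : ZMod p) ^ (j' + 1) * ∏ k ∈ range (j' + 1), (((n + 1 + k : ℕ)) : ZMod p)) := by
          rw [pow_add]; ring
      _ = ((-1 : ZMod p) ^ i * ∏ k ∈ range i, (((2 * k + 1 : ℕ)) : ZMod p)) *
          (∏ k ∈ range (j' + 1), (((2 * k + 1 : ℕ)) : ZMod p)) := by rw [hprodR, hprodQ]
      _ = _ := by ring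
  -- the key ZMod identity (star)
  have h4e : (4 : ZMod p) ^ (i + (j' + 1)) =
      (2 : ZMod p) ^ (i + (j' + 1)) * (2 : ZMod p) ^ (i + (j' + 1)) := by
    rw [show (4 : ZMod p) = 2 * 2 by norm_num, mul_pow]
  have star : (2 : ZMod p) * (((2 * i)! : ℕ) : ZMod p) * ((r2 ! : ℕ) : ZMod p) *
      (((n - i)! : ℕ) : ZMod p) =
      (-1 : ZMod p) ^ i * (4 : ZMod p) ^ (i + (j' + 1)) * ((j' ! : ℕ) : ZMod p) *
        ((i ! : ℕ) : ZMod p) * ((((j' + 1) + n)! : ℕ) : ZMod p) := by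
    have hneg : (-1 : ZMod p) ^ i * (-1 : ZMod p) ^ i = 1 := by
      rw [← pow_add]
      exact Even.neg_one_pow ⟨i, rfl⟩
    rw [hF2i, hF2j, hFjn, hFn, h4e]
    linear_combination (-((-1 : ZMod p) ^ i * (2 : ZMod p) ^ (i + (j' + 1)) *
        (((j' ! : ℕ) : ZMod p) * ((i ! : ℕ) : ZMod p) * (((n - i)! : ℕ) : ZMod p)))) * hcomb -
      ((2 : ZMod p) ^ (i + (j' + 1)) *
        (((j' ! : ℕ) : ZMod p) * ((i ! : ℕ) : ZMod p) * (((n - i)! : ℕ) : ZMod p)) *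
        ((∏ k ∈ range i, (((2 * k + 1 : ℕ)) : ZMod p)) *
          ∏ k ∈ range (j' + 1), (((2 * k + 1 : ℕ)) : ZMod p))) * hneg
  -- relate the binomial on the RHS
  have hCc : (Nat.choose ((j' + 1) - 1) (n - i) * (n - i)! * r1 ! : ℕ) = j' ! := by
    have hle : n - i ≤ (j' + 1) - 1 := by omega
    have := Nat.choose_mul_factorial_mul_factorial hle
    rwa [show (j' + 1) - 1 - (n - i) = r1 by omega] at this
  have hCcast : ((Nat.choose ((j' + 1) - 1) (n - i) : ℕ) : ZMod p) *
      (((n - i)! : ℕ) : ZMod p) * ((r1 ! : ℕ) : ZMod p) = ((j' ! : ℕ) : ZMod p) := by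
    have := congrArg (Nat.cast : ℕ → ZMod p) hCc
    push_cast at this
    push_cast
    linear_combination this
  -- final cancellation
  have hUne : (2 : ZMod p) * ((i ! : ℕ) : ZMod p) * ((((j' + 1) + n)! : ℕ) : ZMod p) *
      ((r1 ! : ℕ) : ZMod p) * (((n - i)! : ℕ) : ZMod p) ≠ 0 := by
    exact mul_ne_zero (mul_ne_zero (mul_ne_zero (mul_ne_zero h2ne
      (hfac_ne _ (by omega))) (hfac_ne _ (by omega))) (hfac_ne _ (by omega)))
      (hfac_ne _ (by omega))
  have hinv : (2 : ZMod p) * (2 : ZMod p)⁻¹ = 1 := mul_inv_cancel₀ h2ne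
  refine mul_right_cancel₀ hUne ?_
  calc (S : ZMod p) * ((2 : ZMod p) * ((i ! : ℕ) : ZMod p) *
        ((((j' + 1) + n)! : ℕ) : ZMod p) * ((r1 ! : ℕ) : ZMod p) * (((n - i)! : ℕ) : ZMod p))
      = (2 : ZMod p) * ((S : ZMod p) * ((i ! : ℕ) : ZMod p) *
          ((((j' + 1) + n)! : ℕ) : ZMod p) * ((r1 ! : ℕ) : ZMod p)) *
          (((n - i)! : ℕ) : ZMod p) := by ring
    _ = (2 : ZMod p) * ((((2 * i)! : ℕ) : ZMod p) * ((r2 ! : ℕ) : ZMod p)) *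
          (((n - i)! : ℕ) : ZMod p) := by rw [e6]
    _ = (-1 : ZMod p) ^ i * (4 : ZMod p) ^ (i + (j' + 1)) * ((j' ! : ℕ) : ZMod p) *
          ((i ! : ℕ) : ZMod p) * ((((j' + 1) + n)! : ℕ) : ZMod p) := by
        linear_combination star
    _ = (-1 : ZMod p) ^ i * (4 : ZMod p) ^ (i + (j' + 1)) *
          (((Nat.choose ((j' + 1) - 1) (n - i) : ℕ) : ZMod p) *
            (((n - i)! : ℕ) : ZMod p) * ((r1 ! : ℕ) : ZMod p)) *
          ((i ! : ℕ) : ZMod p) * ((((j' + 1) + n)! : ℕ) : ZMod p) := by rw [hCcast]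
    _ = (-1 : ZMod p) ^ i * (4 : ZMod p) ^ (i + (j' + 1)) *
          ((Nat.choose ((j' + 1) - 1) (n - i) : ℕ) : ZMod p) * (2 : ZMod p)⁻¹ *
          ((2 : ZMod p) * ((i ! : ℕ) : ZMod p) * ((((j' + 1) + n)! : ℕ) : ZMod p) *
            ((r1 ! : ℕ) : ZMod p) * (((n - i)! : ℕ) : ZMod p)) := by
        linear_combination (-((-1 : ZMod p) ^ i * (4 : ZMod p) ^ (i + (j' + 1)) *
          ((Nat.choose ((j' + 1) - 1) (n - i) : ℕ) : ZMod p) *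
          ((i ! : ℕ) : ZMod p) * ((((j' + 1) + n)! : ℕ) : ZMod p) *
          ((r1 ! : ℕ) : ZMod p) * (((n - i)! : ℕ) : ZMod p))) * hinv
end

section
/- For an odd prime p with n = (p-1)/2, and integers i, j with 1 ≤ j ≤ n and i+j ≤ n, the super Catalan number S(i, j+n) = C(2i,i)*C(2j+2n,j+n)/C(i+j+n,i) is congruent to 0 modulo p. -/
open Nat Finset

private lemma floor_ineq (a b c : ℕ) : a / c + b / c + (a + b) / c ≤ 2 * a / c + 2 * b / c := by
  obtain rfl | hc := Nat.eq_zero_or_pos c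
  · simp
  rw [two_mul, two_mul, Nat.add_div hc, Nat.add_div hc, Nat.add_div hc]
  have h1 := Nat.mod_lt a hc
  have h2 := Nat.mod_lt b hc
  split_ifs <;> omega

private lemma fact_fact {p : ℕ} (hp : p.Prime) (k b : ℕ) (hb : Nat.log p k < b) :
    (k !).factorization p = ∑ i ∈ Finset.Ico 1 b, k / p ^ i := by
  have h := fun r => Nat.Prime.pow_dvd_factorial_iff (n := k) (r := r) (b := b) hp hb
  refine le_antisymm ((h _).mp (Nat.ordProj_dvd _ _)) ?_
  exact (hp.pow_dvd_iff_le_factorization (Nat.factorial_ne_zero k)).mp ((h _).mpr le_rfl)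

private lemma key_dvd (m n : ℕ) : m ! * n ! * (m + n)! ∣ (2 * m)! * (2 * n)! := by
  have hA : m ! * n ! * (m + n)! ≠ 0 := by positivity
  have hB : (2 * m)! * (2 * n)! ≠ 0 := by positivity
  rw [← Nat.factorization_le_iff_dvd hA hB, Finsupp.le_def]
  intro p
  by_cases hpp : p.Prime
  · set b := 2 * m + 2 * n + 1 with hbdef
    have hlog : ∀ k : ℕ, k ≤ 2 * m + 2 * n → Nat.log p k < b :=
      fun k hk => lt_of_le_of_lt ((Nat.log_le_self p k).trans hk) (by omega)
    rw [Nat.factorization_mul (by positivity) (by positivity),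
      Nat.factorization_mul (by positivity) (by positivity),
      Nat.factorization_mul (by positivity) (by positivity)]
    simp only [Finsupp.add_apply]
    rw [fact_fact hpp m b (hlog m (by omega)), fact_fact hpp n b (hlog n (by omega)),
      fact_fact hpp (m + n) b (hlog (m + n) (by omega)),
      fact_fact hpp (2 * m) b (hlog (2 * m) (by omega)),
      fact_fact hpp (2 * n) b (hlog (2 * n) (by omega)),
      ← Finset.sum_add_distrib, ← Finset.sum_add_distrib, ← Finset.sum_add_distrib]
    exact Finset.sum_le_sum fun i _ => floor_ineq m n (p ^ i)
  · simp [Nat.factorization_eq_zero_of_not_prime _ hpp]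

private lemma choose_dvd_lemma (m k : ℕ) :
    (m + k).choose m ∣ (2 * m).choose m * (2 * k).choose k := by
  have e1 : (m + k)! = (m + k).choose m * m ! * k ! := by
    have := Nat.choose_mul_factorial_mul_factorial (Nat.le_add_right m k)
    rwa [Nat.add_sub_cancel_left, eq_comm] at this
  have e2 : (2 * m)! = (2 * m).choose m * m ! * m ! := by
    have := Nat.choose_mul_factorial_mul_factorial (show m ≤ 2 * m by omega)
    rwa [show 2 * m - m = m by omega, eq_comm] at this
  have e3 : (2 * k)! = (2 * k).choose k * k ! * k ! := by
    have := Nat.choose_mul_factorial_mul_factorial (show k ≤ 2 * k by omega)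
    rwa [show 2 * k - k = k by omega, eq_comm] at this
  have h := key_dvd m k
  rw [e1, e2, e3] at h
  have h2 : m ! * k ! * m ! * k ! * ((m + k).choose m) ∣
      m ! * k ! * m ! * k ! * ((2 * m).choose m * (2 * k).choose k) := by
    calc m ! * k ! * m ! * k ! * ((m + k).choose m)
        = m ! * k ! * ((m + k).choose m * m ! * k !) := by ring
      _ ∣ (2 * m).choose m * m ! * m ! * ((2 * k).choose k * k ! * k !) := h
      _ = m ! * k ! * m ! * k ! * ((2 * m).choose m * (2 * k).choose k) := by ring
  exact (Nat.mul_dvd_mul_iff_left (by positivity)).mp h2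

theorem stmt17 (p : ℕ) (hp : p.Prime) (hodd : Odd p) (i j : ℕ)
    (hj1 : 1 ≤ j) (hj : j ≤ (p - 1) / 2) (hij : i + j ≤ (p - 1) / 2) :
    (↑((Nat.choose (2 * i) i * Nat.choose (2 * j + 2 * ((p - 1) / 2)) (j + (p - 1) / 2)) /
          Nat.choose (i + j + (p - 1) / 2) i) : ZMod p) = 0 := by
  set n := (p - 1) / 2 with hn
  obtain ⟨k, hk⟩ := hodd
  have h2n : 2 * n = p - 1 := by omega
  have hp2 : 2 ≤ p := hp.two_le
  -- p divides the second binomial coefficient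
  have hd : p ∣ (2 * j + 2 * n).choose (j + n) := by
    apply hp.dvd_choose (a := j + n) (b := 2 * j + 2 * n) <;> omega
  -- p does not divide the denominator
  have hnd : ¬ p ∣ (i + j + n).choose i := by
    intro h
    have h1 : p ∣ (i + j + n)! := by
      rw [← Nat.choose_mul_factorial_mul_factorial (show i ≤ i + j + n by omega)]
      exact Dvd.dvd.mul_right (Dvd.dvd.mul_right h _) _
    have := (Nat.Prime.dvd_factorial hp).mp h1
    omega
  -- the denominator divides the numerator
  have hdd : (i + j + n).choose i ∣ (2 * i).choose i * (2 * j + 2 * n).choose (j + n) := by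
    have h := choose_dvd_lemma i (j + n)
    rwa [show i + (j + n) = i + j + n by ring, show 2 * (j + n) = 2 * j + 2 * n by ring] at h
  have hpd : (i + j + n).choose i * p ∣ (2 * i).choose i * (2 * j + 2 * n).choose (j + n) := by
    refine Nat.Coprime.mul_dvd_of_dvd_of_dvd ?_ hdd (Dvd.dvd.mul_left hd _)
    exact ((Nat.Prime.coprime_iff_not_dvd hp).mpr hnd).symm
  have : p ∣ (2 * i).choose i * (2 * j + 2 * n).choose (j + n) / (i + j + n).choose i :=
    (Nat.dvd_div_iff_mul_dvd hdd).mpr hpd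
  exact (ZMod.natCast_eq_zero_iff _ _).mpr this
end

section
/- For any odd prime p with n = (p-1)/2, the sum over i from 0 to n and j from n+1 to 2n of (i+j)*S(i,j) is congruent to 2*(-1)^n - (8/3)*(p/3) modulo p (for p ≥ 5, with 1/3 the inverse of 3 mod p). -/
open Finset

namespace SuperCatalanAux

open Nat

lemma div_ineq (d m n : ℕ) (hd : 0 < d) :
    m / d + n / d + (m + n) / d ≤ 2 * m / d + 2 * n / d := by
  rw [Nat.add_div hd, two_mul, two_mul, Nat.add_div hd, Nat.add_div hd]
  have h1 : m % d < d := Nat.mod_lt _ hd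
  have h2 : n % d < d := Nat.mod_lt _ hd
  split_ifs <;> omega

lemma fact_dvd_fact (m n : ℕ) : m ! * n ! * (m + n)! ∣ (2 * m)! * (2 * n)! := by
  rw [← Nat.factorization_le_iff_dvd (by positivity) (by positivity)]
  rw [Nat.factorization_mul (by positivity) (by positivity),
      Nat.factorization_mul (by positivity) (by positivity),
      Nat.factorization_mul (by positivity) (by positivity)]
  intro q
  rcases em q.Prime with hq | hq
  · have : Fact q.Prime := ⟨hq⟩
    simp only [Finsupp.coe_add, Pi.add_apply]
    set b := Nat.log q (2 * (m + n)) + 1 with hb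
    have hlog : ∀ k, k ≤ 2 * (m + n) → Nat.log q k < b := fun k hk =>
      lt_of_le_of_lt (Nat.log_mono_right hk) (Nat.lt_succ_self _)
    rw [Nat.factorization_def _ hq, Nat.factorization_def _ hq, Nat.factorization_def _ hq,
        Nat.factorization_def _ hq, Nat.factorization_def _ hq,
        padicValNat_factorial (hlog m (by omega)), padicValNat_factorial (hlog n (by omega)),
        padicValNat_factorial (hlog (m+n) (by omega)),
        padicValNat_factorial (hlog (2*m) (by omega)), padicValNat_factorial (hlog (2*n) (by omega)),
        ← Finset.sum_add_distrib, ← Finset.sum_add_distrib, ← Finset.sum_add_distrib]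
    exact Finset.sum_le_sum fun i _ => div_ineq (q ^ i) m n (pow_pos hq.pos i)
  · simp [Nat.factorization_eq_zero_of_not_prime _ hq]

lemma superCatalan_spec (m n : ℕ) :
    superCatalan m n * (m ! * n ! * (m + n)!) = (2 * m)! * (2 * n)! := by
  obtain ⟨k, hk⟩ := fact_dvd_fact m n
  have hN : Nat.choose (2*m) m * Nat.choose (2*n) n = k * Nat.choose (m+n) m := by
    have h1 : Nat.choose (2*m) m * (m ! * m !) = (2*m)! := by
      have := Nat.choose_mul_factorial_mul_factorial (show m ≤ 2*m by omega)
      rw [show 2*m - m = m by omega] at this; linarith [this]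
    have h2 : Nat.choose (2*n) n * (n ! * n !) = (2*n)! := by
      have := Nat.choose_mul_factorial_mul_factorial (show n ≤ 2*n by omega)
      rw [show 2*n - n = n by omega] at this; linarith [this]
    have h3 : Nat.choose (m+n) m * (m ! * n !) = (m+n)! := by
      have := Nat.choose_mul_factorial_mul_factorial (show m ≤ m+n by omega)
      rw [show m+n - m = n by omega] at this; linarith [this]
    have key : (Nat.choose (2*m) m * Nat.choose (2*n) n) * (m ! * m ! * (n ! * n !)) =
        (k * Nat.choose (m+n) m) * (m ! * m ! * (n ! * n !)) := by
      calc (Nat.choose (2*m) m * Nat.choose (2*n) n) * (m ! * m ! * (n ! * n !))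
          = (Nat.choose (2*m) m * (m ! * m !)) * (Nat.choose (2*n) n * (n ! * n !)) := by ring
        _ = (2*m)! * (2*n)! := by rw [h1, h2]
        _ = k * (m ! * n ! * (m+n)!) := by rw [hk]; ring
        _ = k * (m ! * n ! * (Nat.choose (m+n) m * (m ! * n !))) := by rw [h3]
        _ = (k * Nat.choose (m+n) m) * (m ! * m ! * (n ! * n !)) := by ring
    exact Nat.eq_of_mul_eq_mul_right (by positivity) key
  have hS : superCatalan m n = k := by
    unfold superCatalan
    rw [hN, Nat.mul_div_cancel _ (Nat.choose_pos (Nat.le_add_right m n))]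
  rw [hS, hk]; ring

lemma fact_split (p : ℕ) (hp : p.Prime) (r : ℕ) :
    ∃ M : ℕ, (p + r)! = p * M ∧ (M : ZMod p) = -(r ! : ZMod p) := by
  haveI : Fact p.Prime := ⟨hp⟩
  induction r with
  | zero =>
    have hp1 : 1 ≤ p := hp.pos
    refine ⟨(p-1)!, ?_, ?_⟩
    · rw [Nat.add_zero]
      conv_lhs => rw [show p = (p-1)+1 by omega]
      rw [Nat.factorial_succ, show p - 1 + 1 = p by omega]
    · rw [ZMod.wilsons_lemma]; simp
  | succ r ih =>
    obtain ⟨M, hM, hMc⟩ := ih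
    refine ⟨(p + r + 1) * M, ?_, ?_⟩
    · rw [show p + (r+1) = (p + r) + 1 by omega, Nat.factorial_succ, hM]; ring
    · push_cast
      rw [ZMod.natCast_self]
      rw [hMc, Nat.factorial_succ]
      push_cast
      ring

lemma wilson_compl (p : ℕ) (hp : p.Prime) : ∀ a, 1 ≤ a → a ≤ p →
    ((p - a)! : ZMod p) * ((a - 1)! : ZMod p) = (-1)^a := by
  haveI : Fact p.Prime := ⟨hp⟩
  intro a
  induction a with
  | zero => omega
  | succ a ih =>
    intro _ hle
    rcases Nat.eq_zero_or_pos a with rfl | ha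
    · simpa using ZMod.wilsons_lemma p
    · have ih' := ih ha (by omega)
      have hsub : p - a = (p - (a+1)) + 1 := by omega
      rw [hsub, Nat.factorial_succ] at ih'
      push_cast at ih'
      have hc : ((p - (a+1) : ℕ) : ZMod p) + 1 = -(a : ZMod p) := by
        have he : p - (a+1) + 1 + a = p := by omega
        have := congrArg (fun x : ℕ => (x : ZMod p)) he
        push_cast at this
        rw [ZMod.natCast_self] at this
        linear_combination this
      rw [hc] at ih'
      have hfa : ((a + 1 - 1)! : ZMod p) = (a : ZMod p) * ((a-1)! : ZMod p) := by
        rw [show a + 1 - 1 = a - 1 + 1 by omega, Nat.factorial_succ,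
          show a - 1 + 1 = a by omega]
        push_cast
        ring
      rw [hfa, pow_succ]
      linear_combination -ih'

lemma central_rec (i : ℕ) :
    Nat.choose (2*i+2) (i+1) * (i+1) = 2 * (2*i+1) * Nat.choose (2*i) i := by
  have h1 := Nat.add_one_mul_choose_eq (2*i+1) i
  have h2 := Nat.add_one_mul_choose_eq (2*i) i
  have h3 := Nat.choose_symm_half i
  calc Nat.choose (2*i+2) (i+1) * (i+1)
      = Nat.choose (2*i+1+1) (i+1) * (i+1) := by ring_nf
    _ = (2*i+1+1) * Nat.choose (2*i+1) i := h1.symm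
    _ = 2 * (Nat.choose (2*i+1) (i+1) * (i+1)) := by rw [h3]; ring
    _ = 2 * ((2*i+1) * Nat.choose (2*i) i) := by rw [← h2]
    _ = 2 * (2*i+1) * Nat.choose (2*i) i := by ring

lemma central_binom_mod (p n : ℕ) (hp : p.Prime) (hn : 2*n+1 = p) :
    ∀ i, i ≤ n → ((Nat.choose (2*i) i : ℕ) : ZMod p) = (-4)^i * ((Nat.choose n i : ℕ) : ZMod p) := by
  haveI : Fact p.Prime := ⟨hp⟩
  have hp0 : ((p : ℕ) : ZMod p) = 0 := ZMod.natCast_self p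
  have h2n : (2 * (n : ZMod p) + 1) = 0 := by
    have := congrArg (fun x : ℕ => (x : ZMod p)) hn
    push_cast at this; rw [hp0] at this; linear_combination this
  intro i
  induction i with
  | zero => simp
  | succ i ih =>
    intro hle
    have ih' := ih (by omega)
    have hne : ((i+1 : ℕ) : ZMod p) ≠ 0 := by
      intro h
      rw [ZMod.natCast_eq_zero_iff] at h
      have := Nat.le_of_dvd (by omega) h
      omega
    apply mul_left_cancel₀ hne
    have key := congrArg (fun x : ℕ => (x : ZMod p)) (central_rec i)
    push_cast at key
    have hright := congrArg (fun x : ℕ => (x : ZMod p)) (Nat.choose_succ_right_eq n i)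
    rw [Nat.cast_mul, Nat.cast_mul, Nat.cast_sub (show i ≤ n by omega)] at hright
    push_cast at hright
    rw [show 2*(i+1) = 2*i+2 by ring]
    push_cast
    linear_combination key + (2*(2*(i:ZMod p)+1))*ih' - (-4:ZMod p)^(i+1)*hright
      + 2*(-4:ZMod p)^i*((Nat.choose n i : ℕ) : ZMod p)*h2n

lemma sum_choose_mul {R : Type*} [CommRing R] (n b : ℕ) (hb : b ≤ n) (x : R) :
    ∑ i ∈ range (n+1), (Nat.choose n i : R) * (Nat.choose i b : R) * x^i
      = (Nat.choose n b : R) * x^b * (1+x)^(n-b) := by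
  rw [← Finset.sum_subset (show Finset.Ico b (n+1) ⊆ range (n+1) by
      intro i hi; simp only [Finset.mem_Ico] at hi; exact Finset.mem_range.2 hi.2)]
  · rw [Finset.sum_Ico_eq_sum_range]
    have hlen : n + 1 - b = (n - b) + 1 := by omega
    rw [hlen]
    have hterm : ∀ m ∈ range ((n-b)+1),
        (Nat.choose n (b+m) : R) * (Nat.choose (b+m) b : R) * x^(b+m)
          = (Nat.choose n b : R) * x^b * ((Nat.choose (n-b) m : R) * x^m) := by
      intro m hm
      simp only [Finset.mem_range] at hm
      have h1 : Nat.choose n (b+m) * Nat.choose (b+m) b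
          = Nat.choose n b * Nat.choose (n-b) m := by
        have := Nat.choose_mul (n := n) (show b ≤ b+m by omega)
        rwa [Nat.add_sub_cancel_left] at this
      have := congrArg (fun y : ℕ => (y : R)) h1
      push_cast at this
      rw [pow_add]
      linear_combination x^b * x^m * this
    rw [Finset.sum_congr rfl hterm, ← Finset.mul_sum]
    congr 1
    have := add_pow x 1 (n-b)
    simp only [one_pow, mul_one] at this
    rw [add_comm 1 x]
    rw [this]
    exact Finset.sum_congr rfl fun i _ => by ring
  · intro i hi hni
    simp only [Finset.mem_range, Finset.mem_Ico] at hi hni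
    have : i < b := by omega
    rw [Nat.choose_eq_zero_of_lt this]
    simp

lemma N1 (a : ℕ) (ha : 1 ≤ a) :
    (a+1)! * (a-1)! * Nat.choose (2*a+2) (a+1) = 4*(2*a+1)*(2*a-1)! := by
  obtain ⟨b, rfl⟩ : ∃ b, a = b + 1 := ⟨a - 1, by omega⟩
  simp only [Nat.add_sub_cancel]
  have hC := Nat.choose_mul_factorial_mul_factorial (show b+1+1 ≤ 2*(b+1)+2 by omega)
  rw [show 2*(b+1)+2-(b+1+1) = b+2 by omega] at hC
  apply Nat.eq_of_mul_eq_mul_right (Nat.factorial_pos (b+2))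
  have e1 : (2*(b+1)+2)! = (2*b+4)*((2*b+3)*((2*b+2)*(2*b+1)!)) := by
    rw [show 2*(b+1)+2 = (2*b+3)+1 by ring, Nat.factorial_succ,
        show (2*b+3) = (2*b+2)+1 by ring, Nat.factorial_succ,
        show (2*b+2) = (2*b+1)+1 by ring, Nat.factorial_succ]
  have e2 : (b+2)! = (b+2)*((b+1)*b !) := by
    rw [Nat.factorial_succ, Nat.factorial_succ]
  have e3 : (b+1+1) = b+2 := by ring
  rw [e3] at hC
  rw [show 2*(b+1)-1 = 2*b+1 by omega, show b+1+1 = b+2 by ring]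
  calc (b+2)! * b ! * Nat.choose (2*(b+1)+2) (b+2) * (b+2)!
      = b ! * (Nat.choose (2*(b+1)+2) (b+2) * (b+2)! * (b+2)!) := by ring
    _ = b ! * (2*(b+1)+2)! := by rw [hC]
    _ = b ! * ((2*b+4)*((2*b+3)*((2*b+2)*(2*b+1)!))) := by rw [e1]
    _ = 4*(2*(b+1)+1)*(2*b+1)! * ((b+2)*((b+1)*b !)) := by ring
    _ = 4*(2*(b+1)+1)*(2*b+1)! * (b+2)! := by rw [e2]

lemma N2 (a i : ℕ) (hai : a ≤ i) :
    (a+1)! * Nat.choose i (a+1) * (i-a)! = (i-a) * i ! := by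
  rcases Nat.eq_or_lt_of_le hai with rfl | hlt
  · simp [Nat.choose_succ_self]
  · obtain ⟨t, rfl⟩ : ∃ t, i = a+1+t := ⟨i - (a+1), by omega⟩
    have hC := Nat.choose_mul_factorial_mul_factorial (show a+1 ≤ a+1+t by omega)
    rw [show a+1+t-(a+1) = t by omega] at hC
    rw [show a+1+t-a = t+1 by omega, Nat.factorial_succ]
    calc (a+1)! * Nat.choose (a+1+t) (a+1) * ((t+1) * t !)
        = (t+1) * (Nat.choose (a+1+t) (a+1) * (a+1)! * t !) := by ring
      _ = (t+1) * (a+1+t)! := by rw [hC]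

lemma geom_sum {R : Type*} [CommRing R] : ∀ m : ℕ, 1 ≤ m →
    4 * ∑ b ∈ range m, (b : R) * 3^(b-1) = (2*(m:R) - 3) * 3^(m-1) + 1 := by
  intro m
  induction m with
  | zero => omega
  | succ m ih =>
    intro _
    rcases Nat.eq_zero_or_pos m with rfl | hm
    · norm_num
    · obtain ⟨k, rfl⟩ : ∃ k, m = k + 1 := ⟨m - 1, by omega⟩
      have ih' := ih (by omega)
      rw [Finset.sum_range_succ, mul_add, ih']
      simp only [Nat.add_sub_cancel]
      push_cast
      rw [pow_succ]
      ring

lemma fact_ne (p : ℕ) (hp : p.Prime) (m : ℕ) (hm : m < p) : ((m ! : ℕ) : ZMod p) ≠ 0 := by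
  haveI : Fact p.Prime := ⟨hp⟩
  intro h
  rw [ZMod.natCast_eq_zero_iff] at h
  have := (Nat.Prime.dvd_factorial hp).mp h
  omega

lemma term_val (p : ℕ) (hp : p.Prime) (n : ℕ) (hn : 2*n+1 = p)
    (a i : ℕ) (ha1 : 1 ≤ a) (han : a ≤ n) (hi : i ≤ n) :
    (((i + (p - a)) * superCatalan i (p - a) : ℕ) : ZMod p)
      = (-1)^a * ((a+1)! : ZMod p) * ((a-1)! : ZMod p) * (((p-2*a)! : ℕ) : ZMod p)
        * (-4)^i * ((Nat.choose n i : ℕ) : ZMod p) * ((Nat.choose i (a+1) : ℕ) : ZMod p) := by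
  haveI : Fact p.Prime := ⟨hp⟩
  set j := p - a with hj
  have hple : 2*n+1 = p := hn
  have hjb : n + 1 ≤ j ∧ j ≤ 2*n := by omega
  have spec := superCatalan_spec i j
  have hr : 2*j = p + (p - 2*a) := by omega
  obtain ⟨M, hM, hMc⟩ := fact_split p hp (p - 2*a)
  rw [hr] at spec
  rw [hM] at spec
  rcases lt_or_ge i a with hia | hia
  · -- vanishing case
    rw [Nat.choose_eq_zero_of_lt (show i < a + 1 by omega)]
    push_cast
    rw [mul_zero]
    have hcast := congrArg (fun x : ℕ => (x : ZMod p)) spec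
    push_cast at hcast
    rw [ZMod.natCast_self] at hcast
    have h0 : (superCatalan i j : ZMod p) * ((i ! : ZMod p) * (j ! : ZMod p) * (((i+j)! : ℕ) : ZMod p)) = 0 := by
      push_cast
      linear_combination hcast
    have hine : ((i ! : ℕ) : ZMod p) ≠ 0 := fact_ne p hp i (by omega)
    have hjne : ((j ! : ℕ) : ZMod p) ≠ 0 := fact_ne p hp j (by omega)
    have hijne : (((i+j)! : ℕ) : ZMod p) ≠ 0 := fact_ne p hp (i+j) (by omega)
    have : (superCatalan i j : ZMod p) = 0 := by
      rcases mul_eq_zero.mp h0 with h | h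
      · exact h
      · exfalso
        rcases mul_eq_zero.mp h with h' | h'
        · rcases mul_eq_zero.mp h' with h'' | h''
          · exact hine h''
          · exact hjne h''
        · exact hijne h'
    rw [this]
    ring
  · -- main case
    have hu : i + j = p + (i - a) := by omega
    obtain ⟨M', hM', hM'c⟩ := fact_split p hp (i - a)
    rw [hu, hM'] at spec
    -- cancel p
    have spec2 : superCatalan i j * (i ! * j ! * M') = (2*i)! * M := by
      apply Nat.eq_of_mul_eq_mul_left hp.pos
      calc p * (superCatalan i j * (i ! * j ! * M'))
          = superCatalan i j * (i ! * j ! * (p * M')) := by ring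
        _ = (2*i)! * (p * M) := spec
        _ = p * ((2*i)! * M) := by ring
    have eq1 : (superCatalan i j : ZMod p) * (i ! : ZMod p) * (j ! : ZMod p) * (((i-a)! : ℕ) : ZMod p)
        = (((2*i)! : ℕ) : ZMod p) * (((p-2*a)! : ℕ) : ZMod p) := by
      have hcast := congrArg (fun x : ℕ => (x : ZMod p)) spec2
      push_cast at hcast
      rw [hMc, hM'c] at hcast
      push_cast at hcast
      linear_combination -hcast
    have hCB : (((2*i)! : ℕ) : ZMod p) = ((Nat.choose (2*i) i : ℕ) : ZMod p) * (i ! : ZMod p) * (i ! : ZMod p) := by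
      have := Nat.choose_mul_factorial_mul_factorial (show i ≤ 2*i by omega)
      rw [show 2*i - i = i by omega] at this
      have hc := congrArg (fun x : ℕ => (x : ZMod p)) this
      push_cast at hc
      linear_combination -hc
    have w1 : ((j ! : ℕ) : ZMod p) * (((a-1)! : ℕ) : ZMod p) = (-1)^a :=
      wilson_compl p hp a ha1 (by omega)
    have w2 : (((p-2*a)! : ℕ) : ZMod p) * (((2*a-1)! : ℕ) : ZMod p) = 1 := by
      have := wilson_compl p hp (2*a) (by omega) (by omega)
      rwa [pow_mul, neg_one_sq, one_pow] at this
    have hcb := central_binom_mod p n hp hn i hi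
    have hN2c : ((a+1)! : ZMod p) * ((Nat.choose i (a+1) : ℕ) : ZMod p) * (((i-a)! : ℕ) : ZMod p)
        = ((i - a : ℕ) : ZMod p) * ((i ! : ℕ) : ZMod p) := by
      have hc := congrArg (fun x : ℕ => (x : ZMod p)) (N2 a i hia)
      push_cast at hc
      push_cast
      linear_combination hc
    have hsq : ((-1 : ZMod p)^a) * ((-1 : ZMod p)^a) = 1 := by
      rw [← pow_add, show a+a = 2*a by ring, pow_mul, neg_one_sq, one_pow]
    have hij : ((i + j : ℕ) : ZMod p) = ((i - a : ℕ) : ZMod p) := by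
      rw [hu]
      push_cast
      rw [ZMod.natCast_self]
      ring
    rw [Nat.cast_mul, hij]
    have hprodne : ((i ! : ℕ) : ZMod p) * ((j ! : ℕ) : ZMod p) * (((i-a)! : ℕ) : ZMod p) ≠ 0 := by
      have h1 := fact_ne p hp i (by omega)
      have h2 := fact_ne p hp j (by omega)
      have h3 := fact_ne p hp (i-a) (by omega)
      exact mul_ne_zero (mul_ne_zero h1 h2) h3
    apply mul_right_cancel₀ hprodne
    linear_combination (((i-a : ℕ) : ZMod p)) * eq1
      + (((i-a : ℕ) : ZMod p)) * (((p-2*a)! : ℕ) : ZMod p) * hCB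
      + (((i-a : ℕ) : ZMod p)) * ((i ! : ℕ) : ZMod p) * ((i ! : ℕ) : ZMod p) * (((p-2*a)! : ℕ) : ZMod p) * hcb
      - (-4 : ZMod p)^i * ((Nat.choose n i : ℕ) : ZMod p) * ((i ! : ℕ) : ZMod p) * (((p-2*a)! : ℕ) : ZMod p) * hN2c
      - (-1 : ZMod p)^a * (((a+1)! : ℕ) : ZMod p) * (-4 : ZMod p)^i * ((Nat.choose n i : ℕ) : ZMod p)
          * ((Nat.choose i (a+1) : ℕ) : ZMod p) * ((i ! : ℕ) : ZMod p) * (((p-2*a)! : ℕ) : ZMod p)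
          * (((i-a)! : ℕ) : ZMod p) * w1
      - (((a+1)! : ℕ) : ZMod p) * (-4 : ZMod p)^i * ((Nat.choose n i : ℕ) : ZMod p)
          * ((Nat.choose i (a+1) : ℕ) : ZMod p) * ((i ! : ℕ) : ZMod p) * (((p-2*a)! : ℕ) : ZMod p)
          * (((i-a)! : ℕ) : ZMod p) * hsq

lemma innerSumEval (p n : ℕ) (hp : p.Prime) (hn : 2*n+1 = p) (hn2 : 2 ≤ n)
    (a : ℕ) (ha1 : 1 ≤ a) (han : a ≤ n) :
    ∑ i ∈ range (n+1), (((i + (p - a)) * superCatalan i (p - a) : ℕ) : ZMod p)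
      = 8 * (-1 : ZMod p)^n * ((n - a : ℕ) : ZMod p) * 3^(n-a-1) := by
  haveI : Fact p.Prime := ⟨hp⟩
  have hrw : ∀ i ∈ range (n+1),
      (((i + (p - a)) * superCatalan i (p - a) : ℕ) : ZMod p)
        = ((-1 : ZMod p)^a * ((a+1)! : ZMod p) * ((a-1)! : ZMod p) * (((p-2*a)! : ℕ) : ZMod p))
          * (((Nat.choose n i : ℕ) : ZMod p) * ((Nat.choose i (a+1) : ℕ) : ZMod p) * (-4 : ZMod p)^i) := by
    intro i hi
    simp only [Finset.mem_range] at hi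
    rw [term_val p hp n hn a i ha1 han (by omega)]
    ring
  rw [Finset.sum_congr rfl hrw, ← Finset.mul_sum]
  rcases Nat.eq_or_lt_of_le han with rfl | hlt
  · have hz : ∀ i ∈ range (a+1),
        ((Nat.choose a i : ℕ) : ZMod p) * ((Nat.choose i (a+1) : ℕ) : ZMod p) * (-4 : ZMod p)^i = 0 := by
      intro i hi
      simp only [Finset.mem_range] at hi
      rw [Nat.choose_eq_zero_of_lt (show i < a + 1 by omega)]
      push_cast; ring
    rw [Finset.sum_congr rfl hz]
    simp
  · have hsum := sum_choose_mul (R := ZMod p) n (a+1) (by omega) (-4)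
    rw [show ((1 : ZMod p) + (-4)) = -3 by ring, show n - (a+1) = n-a-1 by omega] at hsum
    rw [hsum]
    have hB : (((2*a-1)! : ℕ) : ZMod p) ≠ 0 := fact_ne p hp (2*a-1) (by omega)
    have w2 : (((p-2*a)! : ℕ) : ZMod p) * (((2*a-1)! : ℕ) : ZMod p) = 1 := by
      have := wilson_compl p hp (2*a) (by omega) (by omega)
      rwa [pow_mul, neg_one_sq, one_pow] at this
    have N1c : ((a+1)! : ZMod p) * ((a-1)! : ZMod p) * ((Nat.choose (2*a+2) (a+1) : ℕ) : ZMod p)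
        = 4*(2*(a : ZMod p)+1)*(((2*a-1)! : ℕ) : ZMod p) := by
      have hc := congrArg (fun x : ℕ => (x : ZMod p)) (N1 a ha1)
      push_cast at hc
      linear_combination hc
    have hcb' : ((Nat.choose (2*a+2) (a+1) : ℕ) : ZMod p)
        = (-4 : ZMod p)^(a+1) * ((Nat.choose n (a+1) : ℕ) : ZMod p) := by
      have := central_binom_mod p n hp hn (a+1) (by omega)
      rwa [show 2*(a+1) = 2*a+2 by ring] at this
    have h2n : (2 * (n : ZMod p) + 1) = 0 := by
      have := congrArg (fun x : ℕ => (x : ZMod p)) hn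
      push_cast at this
      rw [ZMod.natCast_self] at this
      linear_combination this
    have hkey : (-1:ZMod p)^a * (4*(2*(a:ZMod p)+1)) * (-3 : ZMod p)^(n-a-1)
        = 8*(-1:ZMod p)^n * ((n-a : ℕ) : ZMod p) * 3^(n-a-1) := by
      obtain ⟨m, hm⟩ : ∃ m, n = a + m + 1 := ⟨n - a - 1, by omega⟩
      rw [hm] at h2n ⊢
      rw [show a + m + 1 - a - 1 = m by omega,
          show ((-3:ZMod p)) = (-1) * 3 by ring, mul_pow,
          show a + m + 1 - a = m + 1 by omega,
          pow_add, pow_add, pow_one]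
      push_cast at h2n ⊢
      linear_combination (4*(-1:ZMod p)^a*(-1:ZMod p)^m*(3:ZMod p)^m)*h2n
    apply mul_right_cancel₀ hB
    linear_combination
      ((-1:ZMod p)^a * ((a+1)! : ZMod p) * ((a-1)! : ZMod p) * ((Nat.choose n (a+1) : ℕ) : ZMod p)
        * (-4:ZMod p)^(a+1) * (-3:ZMod p)^(n-a-1)) * w2
      - ((-1:ZMod p)^a * (-3:ZMod p)^(n-a-1) * ((a+1)! : ZMod p) * ((a-1)! : ZMod p)) * hcb'
      + ((-1:ZMod p)^a * (-3:ZMod p)^(n-a-1)) * N1c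
      + (((2*a-1)! : ℕ) : ZMod p) * hkey

end SuperCatalanAux

open SuperCatalanAux in
theorem stmt18 (p : ℕ) (hp : p.Prime) (hp5 : 5 ≤ p) :
    (↑(∑ i ∈ Finset.range ((p - 1) / 2 + 1),
          ∑ j ∈ Finset.Icc ((p - 1) / 2 + 1) (2 * ((p - 1) / 2)),
            (i + j) * superCatalan i j) : ZMod p) =
      2 * (-1 : ZMod p) ^ ((p - 1) / 2) - (8 * (3 : ZMod p)⁻¹) * (legendreSym 3 p : ZMod p) := by
  haveI : Fact p.Prime := ⟨hp⟩
  have hodd : p % 2 = 1 := hp.eq_two_or_odd.resolve_left (by omega)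
  set n := (p - 1) / 2 with hndef
  have hn : 2*n+1 = p := by omega
  have hn2 : 2 ≤ n := by omega
  -- cast the sum
  push_cast
  rw [Finset.sum_comm]
  -- reindex j ↦ a = p - j
  rw [Finset.sum_nbij' (i := fun j => p - j) (j := fun a => p - a)
      (t := Finset.Icc 1 n)
      (g := fun a => ∑ i ∈ range (n+1), (((i + (p - a)) * superCatalan i (p - a) : ℕ) : ZMod p))
      (by intro j hj; simp only [Finset.mem_Icc] at hj ⊢; omega)
      (by intro a ha; simp only [Finset.mem_Icc] at ha ⊢; omega)
      (by intro j hj; simp only [Finset.mem_Icc] at hj; show p - (p - j) = j; omega)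
      (by intro a ha; simp only [Finset.mem_Icc] at ha; show p - (p - a) = a; omega)
      (by
        intro j hj
        simp only [Finset.mem_Icc] at hj
        show _ = ∑ i ∈ range (n+1), (((i + (p - (p - j))) * superCatalan i (p - (p - j)) : ℕ) : ZMod p)
        rw [show p - (p - j) = j by omega]
        exact Finset.sum_congr rfl fun i _ => by push_cast; ring)]
  -- evaluate inner sums
  have hIrw : ∀ a ∈ Finset.Icc 1 n,
      (∑ i ∈ range (n+1), (((i + (p - a)) * superCatalan i (p - a) : ℕ) : ZMod p))
        = 8 * (-1 : ZMod p)^n * ((n - a : ℕ) : ZMod p) * 3^(n-a-1) := by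
    intro a ha
    simp only [Finset.mem_Icc] at ha
    exact innerSumEval p n hp hn hn2 a ha.1 ha.2
  rw [Finset.sum_congr rfl hIrw]
  -- reindex a ↦ b = n - a
  rw [Finset.sum_nbij' (i := fun a => n - a) (j := fun b => n - b)
      (t := Finset.range n)
      (g := fun b => 8 * (-1 : ZMod p)^n * ((b : ℕ) : ZMod p) * 3^(b-1))
      (by intro a ha; simp only [Finset.mem_Icc, Finset.mem_range] at ha ⊢; omega)
      (by intro b hb; simp only [Finset.mem_Icc, Finset.mem_range] at hb ⊢; omega)
      (by intro a ha; simp only [Finset.mem_Icc] at ha; show n - (n - a) = a; omega)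
      (by intro b hb; simp only [Finset.mem_range] at hb; show n - (n - b) = b; omega)
      (by
        intro a ha
        simp only [Finset.mem_Icc] at ha
        show _ = 8 * (-1 : ZMod p)^n * ((n - a : ℕ) : ZMod p) * 3^(n - a - 1)
        rfl)]
  -- factor out and apply geometric sum
  have hfac : ∑ b ∈ Finset.range n, 8 * (-1 : ZMod p)^n * ((b : ℕ) : ZMod p) * 3^(b-1)
      = 2 * (-1 : ZMod p)^n * (4 * ∑ b ∈ Finset.range n, ((b : ℕ) : ZMod p) * 3^(b-1)) := by
    rw [Finset.mul_sum, Finset.mul_sum]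
    exact Finset.sum_congr rfl fun b _ => by ring
  rw [hfac, geom_sum n (by omega)]
  -- arithmetic mod p
  have h2n : 2 * (n : ZMod p) + 1 = 0 := by
    have := congrArg (fun x : ℕ => (x : ZMod p)) hn
    push_cast at this
    rw [ZMod.natCast_self] at this
    linear_combination this
  have h3ne : (3 : ZMod p) ≠ 0 := by
    intro h
    have : ((3:ℕ) : ZMod p) = 0 := by push_cast; exact h
    rw [ZMod.natCast_eq_zero_iff] at this
    have := Nat.le_of_dvd (by norm_num) this
    omega
  -- Legendre symbol facts
  have hp3 : ((p : ℤ) : ZMod 3) ≠ 0 := by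
    intro h
    rw [show ((p : ℤ) : ZMod 3) = ((p : ℕ) : ZMod 3) by push_cast; rfl] at h
    rw [ZMod.natCast_eq_zero_iff] at h
    have h3p := (Nat.prime_dvd_prime_iff_eq (by norm_num) hp).mp h
    omega
  have hQR := legendreSym.quadratic_reciprocity (p := 3) (q := p)
    (by norm_num) (by omega) (by omega)
  rw [show (3:ℕ)/2 = 1 by norm_num, one_mul, show p/2 = n by omega] at hQR
  have hsq3 : legendreSym 3 (p : ℤ) ^ 2 = 1 := legendreSym.sq_one (p := 3) hp3
  have hlp3 : legendreSym p 3 = (-1)^n * legendreSym 3 (p : ℤ) := by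
    have h2 : legendreSym 3 (p:ℤ) * legendreSym 3 (p:ℤ) = 1 := by
      rw [← hsq3]; ring
    norm_num at hQR
    linear_combination (legendreSym 3 (p:ℤ)) * hQR - (legendreSym p 3) * h2
  have hpow : ((legendreSym p 3 : ℤ) : ZMod p) = (3 : ZMod p)^n := by
    have := legendreSym.eq_pow p (3 : ℤ)
    rw [show p/2 = n by omega] at this
    rw [this]
    norm_num
  have h3n : (3 : ZMod p)^n = (-1 : ZMod p)^n * ((legendreSym 3 (p:ℤ) : ℤ) : ZMod p) := by
    rw [← hpow, hlp3]
    push_cast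
    ring
  -- final computation
  have hnm : (3 : ZMod p)^n = 3^(n-1) * 3 := by
    conv_lhs => rw [show n = (n-1)+1 by omega]
    rw [pow_succ]
  have hgoal : 2 * (-1:ZMod p)^n * ((2*(n : ZMod p) - 3) * 3^(n-1) + 1)
      = 2 * (-1 : ZMod p) ^ n - (8 * (3 : ZMod p)⁻¹) * ((legendreSym 3 (p:ℤ) : ℤ) : ZMod p) := by
    have h2n3 : (2*(n : ZMod p) - 3) = -4 := by linear_combination h2n
    rw [h2n3]
    have hL : 8 * (-1:ZMod p)^n * 3^(n-1) = 8 * (3 : ZMod p)⁻¹ * ((legendreSym 3 (p:ℤ) : ℤ) : ZMod p) := by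
      apply mul_right_cancel₀ h3ne
      have hinv : (3:ZMod p)⁻¹ * 3 = 1 := inv_mul_cancel₀ h3ne
      have hsq : (-1:ZMod p)^n * (-1:ZMod p)^n = 1 := by
        rw [← pow_add, show n+n = 2*n by ring, pow_mul, neg_one_sq, one_pow]
      calc 8 * (-1:ZMod p)^n * 3^(n-1) * 3
          = 8 * (-1:ZMod p)^n * ((3:ZMod p)^(n-1) * 3) := by ring
        _ = 8 * (-1:ZMod p)^n * ((3:ZMod p)^n) := by rw [← hnm]
        _ = 8 * ((-1:ZMod p)^n * (-1:ZMod p)^n) * ((legendreSym 3 (p:ℤ) : ℤ) : ZMod p) := by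
            rw [h3n]; ring
        _ = 8 * ((legendreSym 3 (p:ℤ) : ℤ) : ZMod p) := by rw [hsq]; ring
        _ = 8 * (3 : ZMod p)⁻¹ * ((legendreSym 3 (p:ℤ) : ℤ) : ZMod p) * 3 := by
            rw [mul_comm ((3:ZMod p)⁻¹) 3] at hinv
            calc 8 * ((legendreSym 3 (p:ℤ) : ℤ) : ZMod p)
                = 8 * ((legendreSym 3 (p:ℤ) : ℤ) : ZMod p) * (3 * (3:ZMod p)⁻¹) := by rw [hinv]; ring
              _ = 8 * (3 : ZMod p)⁻¹ * ((legendreSym 3 (p:ℤ) : ℤ) : ZMod p) * 3 := by ring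
    linear_combination -hL
  rw [hgoal]
end
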